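/- Let (v_j)_{j∈J} be a countable family of nonnegative reals with Σ_j v_j < ∞, and for each j∈J let (Y^{(j)}_η)_{η∈(0,1]} be nonnegative random variables with E[Y^{(j)}_η] = 1 for all η, such that Y^{(j)}_η → Y^{(j)}_0 almost surely as η ↓ 0 with E[Y^{(j)}_0] = 1. Suppose moreover that S_η := Σ_j v_j Y^{(j)}_η converges almost surely as η ↓ 0 to some limit S_0. Then S_0 = Σ_j v_j Y^{(j)}_0 almost surely. -/
import Mathlib


open MeasureTheory ProbabilityTheory Filter Topology

theorem stmt_3 {Ω : Type*} [MeasureSpace Ω] [IsProbabilityMeasure (ℙ : Measure Ω)]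
    {J : Type*} [Countable J]
    (v : J → ℝ) (hv : ∀ j, 0 ≤ v j) (hsum : Summable v)
    (Y : J → ℝ → Ω → ℝ) (Y0 : J → Ω → ℝ)
    (hnn : ∀ j, ∀ η ∈ Set.Ioc (0:ℝ) 1, ∀ ω, 0 ≤ Y j η ω)
    (hnn0 : ∀ j ω, 0 ≤ Y0 j ω)
    (hmean : ∀ j, ∀ η ∈ Set.Ioc (0:ℝ) 1, ∫ ω, Y j η ω ∂ℙ = 1)
    (hmean0 : ∀ j, ∫ ω, Y0 j ω ∂ℙ = 1)
    (hconv : ∀ j, ∀ᵐ ω ∂ℙ, Tendsto (fun η => Y j η ω) (𝓝[Set.Ioc (0:ℝ) 1] 0) (𝓝 (Y0 j ω)))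
    (S0 : Ω → ℝ)
    (hS : ∀ᵐ ω ∂ℙ, Tendsto (fun η => ∑' j, v j * Y j η ω) (𝓝[Set.Ioc (0:ℝ) 1] 0) (𝓝 (S0 ω))) :
    S0 =ᵐ[ℙ] fun ω => ∑' j, v j * Y0 j ω := by
  classical
  -- integrability
  have hint : ∀ j, ∀ η ∈ Set.Ioc (0:ℝ) 1, Integrable (Y j η) ℙ := by
    intro j η hη
    by_contra h
    have := hmean j η hη
    rw [integral_undef h] at this
    norm_num at this
  have hint0 : ∀ j, Integrable (Y0 j) ℙ := by
    intro j
    by_contra h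
    have := hmean0 j
    rw [integral_undef h] at this
    norm_num at this
  have hmeas : ∀ j, ∀ η ∈ Set.Ioc (0:ℝ) 1, AEMeasurable (Y j η) ℙ :=
    fun j η hη => (hint j η hη).aestronglyMeasurable.aemeasurable
  have hmeas0 : ∀ j, AEMeasurable (Y0 j) ℙ :=
    fun j => (hint0 j).aestronglyMeasurable.aemeasurable
  -- lintegral facts
  have hlY : ∀ j, ∀ η ∈ Set.Ioc (0:ℝ) 1, ∫⁻ ω, ENNReal.ofReal (Y j η ω) ∂ℙ = 1 := by
    intro j η hη
    rw [← ofReal_integral_eq_lintegral_ofReal (hint j η hη)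
      (Eventually.of_forall (hnn j η hη)), hmean j η hη]
    simp
  have hlY0 : ∀ j, ∫⁻ ω, ENNReal.ofReal (Y0 j ω) ∂ℙ = 1 := by
    intro j
    rw [← ofReal_integral_eq_lintegral_ofReal (hint0 j)
      (Eventually.of_forall (hnn0 j)), hmean0 j]
    simp
  set c : ENNReal := ∑' j, ENNReal.ofReal (v j) with hc
  have hcfin : c ≠ ⊤ := by
    rw [hc, ← ENNReal.ofReal_tsum_of_nonneg hv hsum]
    exact ENNReal.ofReal_ne_top
  -- general lintegral computation
  have key : ∀ (Z : J → Ω → ℝ), (∀ j, AEMeasurable (Z j) ℙ) →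
      (∀ j, ∫⁻ ω, ENNReal.ofReal (Z j ω) ∂ℙ = 1) →
      ∫⁻ ω, ∑' j, ENNReal.ofReal (v j * Z j ω) ∂ℙ = c := by
    intro Z hZm hZl
    have : ∀ j ω, ENNReal.ofReal (v j * Z j ω)
        = ENNReal.ofReal (v j) * ENNReal.ofReal (Z j ω) :=
      fun j ω => ENNReal.ofReal_mul (hv j)
    simp only [this]
    rw [lintegral_tsum (fun j => (hZm j).ennreal_ofReal.const_mul _)]
    congr 1
    ext j
    rw [lintegral_const_mul'' _ (hZm j).ennreal_ofReal, hZl j, mul_one]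
  -- the sequence η_n
  set e : ℕ → ℝ := fun n => 1 / (n + 1) with he
  have heIoc : ∀ n, e n ∈ Set.Ioc (0:ℝ) 1 := by
    intro n
    constructor
    · positivity
    · rw [he]
      rw [div_le_one (by positivity)]
      simp
  have htend : Tendsto e atTop (𝓝[Set.Ioc (0:ℝ) 1] 0) :=
    tendsto_nhdsWithin_of_tendsto_nhds_of_eventually_within _
      tendsto_one_div_add_atTop_nhds_zero_nat (Eventually.of_forall heIoc)
  set T : ℕ → Ω → ℝ := fun n ω => ∑' j, v j * Y j (e n) ω with hT
  set L : ℕ → Ω → ENNReal := fun n ω => ∑' j, ENNReal.ofReal (v j * Y j (e n) ω) with hL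
  set W : Ω → ENNReal := fun ω => ∑' j, ENNReal.ofReal (v j * Y0 j ω) with hW
  have hLm : ∀ n, AEMeasurable (L n) ℙ := by
    intro n
    exact AEMeasurable.ennreal_tsum (fun j => (((hmeas j _ (heIoc n)).const_mul (v j)).ennreal_ofReal))
  have hWm : AEMeasurable W ℙ :=
    AEMeasurable.ennreal_tsum (fun j => (((hmeas0 j).const_mul (v j)).ennreal_ofReal))
  have hLint : ∀ n, ∫⁻ ω, L n ω ∂ℙ = c :=
    fun n => key _ (fun j => hmeas j _ (heIoc n)) (fun j => hlY j _ (heIoc n))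
  have hWint : ∫⁻ ω, W ω ∂ℙ = c := key _ hmeas0 hlY0
  -- a.e. summability
  have hae_sum : ∀ᵐ ω ∂ℙ, ∀ n, Summable (fun j => v j * Y j (e n) ω) := by
    rw [ae_all_iff]
    intro n
    filter_upwards [ae_lt_top' (hLm n) (by rw [hLint n]; exact hcfin)] with ω hω
    have := ENNReal.summable_toReal hω.ne
    refine this.congr (fun j => ?_)
    exact ENNReal.toReal_ofReal (mul_nonneg (hv j) (hnn j _ (heIoc n) ω))
  have hae_conv : ∀ᵐ ω ∂ℙ, ∀ j, Tendsto (fun η => Y j η ω)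
      (𝓝[Set.Ioc (0:ℝ) 1] 0) (𝓝 (Y0 j ω)) := ae_all_iff.2 hconv
  -- the main pointwise facts
  have hmain : ∀ᵐ ω ∂ℙ, Summable (fun j => v j * Y0 j ω) ∧
      (∑' j, v j * Y0 j ω) ≤ S0 ω ∧ 0 ≤ S0 ω ∧
      Tendsto (fun n => T n ω) atTop (𝓝 (S0 ω)) := by
    filter_upwards [hae_sum, hae_conv, hS] with ω h1 h2 h3
    have hTt : Tendsto (fun n => T n ω) atTop (𝓝 (S0 ω)) := h3.comp htend
    have hFle : ∀ F : Finset J, (∑ j ∈ F, v j * Y0 j ω) ≤ S0 ω := by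
      intro F
      have hfin : Tendsto (fun n => ∑ j ∈ F, v j * Y j (e n) ω) atTop
          (𝓝 (∑ j ∈ F, v j * Y0 j ω)) := by
        refine tendsto_finset_sum _ (fun j _ => ?_)
        exact (((h2 j).comp htend).const_mul (v j))
      refine le_of_tendsto_of_tendsto hfin hTt (Eventually.of_forall fun n => ?_)
      exact Summable.sum_le_tsum F (fun j _ => mul_nonneg (hv j) (hnn j _ (heIoc n) ω)) (h1 n)
    have hsum0 : Summable (fun j => v j * Y0 j ω) :=
      summable_of_sum_le (fun j => mul_nonneg (hv j) (hnn0 j ω)) hFle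
    refine ⟨hsum0, Summable.tsum_le_of_sum_le hsum0 hFle, ?_, hTt⟩
    exact ge_of_tendsto' hTt (fun n => tsum_nonneg
      (fun j => mul_nonneg (hv j) (hnn j _ (heIoc n) ω)))
  -- W ≤ᵐ ofReal ∘ S0
  have hWle : W ≤ᵐ[ℙ] fun ω => ENNReal.ofReal (S0 ω) := by
    filter_upwards [hmain] with ω ⟨hsum0, hle, _, _⟩
    rw [hW]
    dsimp only
    rw [← ENNReal.ofReal_tsum_of_nonneg (fun j => mul_nonneg (hv j) (hnn0 j ω)) hsum0]
    exact ENNReal.ofReal_le_ofReal hle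
  -- ofReal ∘ S0 is AEMeasurable : it's the a.e. limit of L n
  have hLtend : ∀ᵐ ω ∂ℙ, Tendsto (fun n => L n ω) atTop (𝓝 (ENNReal.ofReal (S0 ω))) := by
    filter_upwards [hae_sum, hmain] with ω h1 ⟨_, _, _, hTt⟩
    have : ∀ n, L n ω = ENNReal.ofReal (T n ω) := by
      intro n
      rw [hL, hT]
      dsimp only
      rw [ENNReal.ofReal_tsum_of_nonneg (fun j => mul_nonneg (hv j) (hnn j _ (heIoc n) ω)) (h1 n)]
    simp only [this]
    exact (ENNReal.continuous_ofReal.tendsto _).comp hTt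
  have hS0m : AEMeasurable (fun ω => ENNReal.ofReal (S0 ω)) ℙ :=
    aemeasurable_of_tendsto_metrizable_ae atTop hLm hLtend
  -- Fatou over Ω
  have hS0int : ∫⁻ ω, ENNReal.ofReal (S0 ω) ∂ℙ ≤ c := by
    have heq : (fun ω => ENNReal.ofReal (S0 ω)) =ᵐ[ℙ]
        fun ω => liminf (fun n => L n ω) atTop := by
      filter_upwards [hLtend] with ω hω
      exact hω.liminf_eq.symm
    rw [lintegral_congr_ae heq]
    refine le_trans (lintegral_liminf_le' hLm) ?_
    simp only [hLint]
    simp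
  -- conclude W = ofReal ∘ S0 a.e.
  have hWeq : W =ᵐ[ℙ] fun ω => ENNReal.ofReal (S0 ω) := by
    refine ae_eq_of_ae_le_of_lintegral_le hWle (by rw [hWint]; exact hcfin) hS0m ?_
    rw [hWint]
    exact hS0int
  -- finish
  filter_upwards [hWeq, hmain] with ω hWω ⟨hsum0, _, hS0nn, _⟩
  have h1 : ENNReal.ofReal (∑' j, v j * Y0 j ω) = ENNReal.ofReal (S0 ω) := by
    rw [ENNReal.ofReal_tsum_of_nonneg (fun j => mul_nonneg (hv j) (hnn0 j ω)) hsum0]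
    exact hWω
  exact ((ENNReal.ofReal_eq_ofReal_iff
    (tsum_nonneg (fun j => mul_nonneg (hv j) (hnn0 j ω))) hS0nn).1 h1).symm
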